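/- With ψ_m as above and Ω > γ > 0, the energy E_{Ω,γ}(ψ_m) = (|m|+1)γ − Ωm − ∫G(|ψ_m|^2) satisfies E_{Ω,γ}(ψ_m) ≤ (|m|+1)γ − Ωm → −∞ as m → +∞, where G ≥ 0. Hence the infimum I_1 = inf{E_{Ω,γ}(u) : ‖u‖_2 = 1} equals −∞. -/

import Mathlib

open MeasureTheory

/-- The vortex test function on `ℝ² ≃ ℂ`. -/
noncomputable def vortex (γ : ℝ) (m : ℤ) (z : ℂ) : ℂ :=
  ((γ ^ (((m.natAbs : ℝ) + 1) / 2) / Real.sqrt (Real.pi * (Nat.factorial m.natAbs)) *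
      ‖z‖ ^ m.natAbs * Real.exp (-γ * ‖z‖ ^ 2 / 2) : ℝ) : ℂ) *
    Complex.exp (Complex.I * (m : ℂ) * (Complex.arg z : ℂ))

/-- The rotational energy functional
`E_{Ω,γ}(u) = (1/2)∫|∇u|² + (γ²/2)∫|x|²|u|² − Ω ∫ ū L_z u − ∫ G(|u|²)` on ℝ². -/
noncomputable def rotEnergy (γ Ω : ℝ) (G : ℝ → ℝ) (u : ℂ → ℂ) : ℝ :=
  (1 / 2) * (∫ z : ℂ, (‖fderiv ℝ u z 1‖ ^ 2 + ‖fderiv ℝ u z Complex.I‖ ^ 2)) +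
    γ ^ 2 / 2 * (∫ z : ℂ, ‖z‖ ^ 2 * ‖u z‖ ^ 2) -
    Ω * (∫ z : ℂ, (starRingEnd ℂ) (u z) *
      (-Complex.I * deriv (fun t : ℝ => u (Complex.exp (Complex.I * (t : ℂ)) * z)) 0)).re -
    ∫ z : ℂ, G (‖u z‖ ^ 2)

namespace VortexAux

open Complex Real Set

/-- normalization constant -/
noncomputable def vc (γ : ℝ) (m : ℕ) : ℝ :=
  γ ^ (((m : ℝ) + 1) / 2) / Real.sqrt (Real.pi * (Nat.factorial m))

/-- smooth form of the vortex -/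
noncomputable def vsm (γ : ℝ) (C : ℂ) (m : ℕ) (z : ℂ) : ℂ :=
  C * Complex.exp ((-(γ:ℂ)/2) * (z * (starRingEnd ℂ) z)) * z ^ m

lemma vortex_eq (γ : ℝ) (m : ℕ) (z : ℂ) :
    vortex γ (m : ℤ) (z : ℂ) = vsm γ ((vc γ m : ℝ) : ℂ) m z := by
  have hE : Complex.exp ((-(γ:ℂ)/2) * (z * (starRingEnd ℂ) z))
      = ((Real.exp (-γ * ‖z‖ ^ 2 / 2) : ℝ) : ℂ) := by
    rw [Complex.mul_conj, Complex.ofReal_exp]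
    congr 1
    rw [← Complex.sq_norm]
    push_cast
    ring
  have hB : ((‖z‖ ^ m : ℝ) : ℂ) * Complex.exp (Complex.I * (m : ℂ) * (Complex.arg z : ℂ))
      = z ^ m := by
    rw [show Complex.I * (m : ℂ) * (Complex.arg z : ℂ)
        = (m : ℂ) * ((Complex.arg z : ℂ) * Complex.I) by ring, Complex.exp_nat_mul]
    push_cast
    rw [← mul_pow, Complex.norm_mul_exp_arg_mul_I]
  rw [vortex, vsm]
  simp only [Int.natAbs_natCast, Int.cast_natCast]
  rw [hE, ← hB, vc]
  push_cast
  ring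

lemma vortex_fun_eq (γ : ℝ) (m : ℕ) :
    vortex γ (m : ℤ) = vsm γ ((vc γ m : ℝ) : ℂ) m :=
  funext (vortex_eq γ m)

lemma vc_sq (γ : ℝ) (hγ : 0 < γ) (m : ℕ) :
    vc γ m ^ 2 = γ ^ (m + 1) / (Real.pi * (Nat.factorial m)) := by
  have hpi : (0:ℝ) < Real.pi * (Nat.factorial m) := by
    have := Real.pi_pos
    have := Nat.factorial_pos m
    positivity
  rw [vc, div_pow, Real.sq_sqrt hpi.le]
  congr 1
  rw [← Real.rpow_natCast (γ ^ (((m : ℝ) + 1) / 2)) 2, ← Real.rpow_mul hγ.le]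
  rw [show ((m : ℝ) + 1) / 2 * (2:ℕ) = ((m+1 : ℕ) : ℝ) by push_cast; ring]
  exact Real.rpow_natCast γ (m+1)

lemma vc_pos (γ : ℝ) (hγ : 0 < γ) (m : ℕ) : 0 < vc γ m := by
  have hpi : (0:ℝ) < Real.pi * (Nat.factorial m) := by
    have := Real.pi_pos
    have := Nat.factorial_pos m
    positivity
  have : (0:ℝ) < γ ^ (((m : ℝ) + 1) / 2) := Real.rpow_pos_of_pos hγ _
  rw [vc]
  positivity

/-- Reduction of a radial integral over `ℂ` to a 1-dimensional integral. -/
lemma integral_radial (f : ℝ → ℝ) :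
    (∫ z : ℂ, f ‖z‖) = (2 * π) * ∫ r in Ioi (0:ℝ), r * f r := by
  calc (∫ z : ℂ, f ‖z‖)
      = ∫ p in Ioi (0:ℝ) ×ˢ Ioo (-π) π, p.1 * f |p.1| := by
        rw [← Complex.integral_comp_polarCoord_symm (fun z => f ‖z‖), polarCoord_target]
        simp_rw [Complex.norm_polarCoord_symm, smul_eq_mul]
    _ = (∫ r in Ioi (0:ℝ), r * f |r|) * ∫ _ in Ioo (-π) π, (1:ℝ) := by
        rw [← setIntegral_prod_mul, Measure.volume_eq_prod]
        simp_rw [mul_one]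
    _ = (2 * π) * ∫ r in Ioi (0:ℝ), r * f |r| := by
        simp only [integral_const, Measure.real, MeasurableSet.univ, Measure.restrict_apply, Set.univ_inter,
          Real.volume_Ioo, sub_neg_eq_add, ← two_mul,
          ENNReal.toReal_ofReal (by positivity : (0:ℝ) ≤ 2 * π), smul_eq_mul, mul_one]
        ring
    _ = (2 * π) * ∫ r in Ioi (0:ℝ), r * f r := by
        congr 1
        refine setIntegral_congr_fun measurableSet_Ioi (fun x hx => ?_)
        rw [abs_of_pos hx]

lemma moment1d {γ : ℝ} (hγ : 0 < γ) (k : ℕ) :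
    (∫ r in Ioi (0:ℝ), r * (r ^ (2*k) * Real.exp (-γ * r ^ 2)))
      = (Nat.factorial k : ℝ) / (2 * γ ^ (k+1)) := by
  have h := _root_.integral_rpow_mul_exp_neg_mul_rpow (p := 2) (q := (2*k+1 : ℝ))
    (by norm_num) (by have := Nat.cast_nonneg (α := ℝ) k; linarith) hγ
  have he : (∫ r in Ioi (0:ℝ), r * (r ^ (2*k) * Real.exp (-γ * r ^ 2)))
      = ∫ x in Ioi (0:ℝ), x ^ ((2*(k:ℝ)+1)) * Real.exp (-γ * x ^ (2:ℝ)) := by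
    refine setIntegral_congr_fun measurableSet_Ioi (fun x hx => ?_)
    rw [show (2*(k:ℝ)+1) = ((2*k+1 : ℕ) : ℝ) by push_cast; ring, Real.rpow_natCast,
      show (2:ℝ) = ((2:ℕ):ℝ) by norm_num, Real.rpow_natCast]
    ring
  rw [he]
  rw [show (2*(k:ℝ)+1) = (2*(k:ℝ)+1 : ℝ) by ring] at h ⊢
  rw [h]
  rw [show (-(2 * (k:ℝ) + 1 + 1) / 2) = -((k:ℝ)+1) by ring,
    show ((2 * (k:ℝ) + 1 + 1) / 2) = (k:ℝ)+1 by ring]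
  rw [Real.Gamma_nat_eq_factorial k, Real.rpow_neg hγ.le,
    show ((k:ℝ)+1) = ((k+1 : ℕ):ℝ) by push_cast; ring, Real.rpow_natCast]
  field_simp
  try ring
  try tauto

lemma momentIntegrable {γ : ℝ} (hγ : 0 < γ) (k : ℕ) :
    IntegrableOn (fun r : ℝ => r * (r ^ (2*k) * Real.exp (-γ * r ^ 2))) (Ioi 0) := by
  have h := integrableOn_rpow_mul_exp_neg_mul_sq (b := γ) hγ
    (s := (2*k+1 : ℝ)) (by have := Nat.cast_nonneg (α := ℝ) k; linarith)
  refine h.congr_fun (fun x hx => ?_) measurableSet_Ioi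
  dsimp only
  rw [show (2*(k:ℝ)+1) = ((2*k+1 : ℕ) : ℝ) by push_cast; ring, Real.rpow_natCast]
  ring

lemma momC {γ : ℝ} (hγ : 0 < γ) (k : ℕ) :
    (∫ z : ℂ, ‖z‖ ^ (2*k) * Real.exp (-γ * ‖z‖ ^ 2))
      = π * (Nat.factorial k : ℝ) / γ ^ (k+1) := by
  rw [integral_radial (fun r => r ^ (2*k) * Real.exp (-γ * r ^ 2)), moment1d hγ k]
  field_simp
lemma hasFDerivAt_vsm (γ : ℝ) (C : ℂ) (m : ℕ) (z : ℂ) :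
    HasFDerivAt (vsm γ C m)
      (((C * Complex.exp ((-(γ:ℂ)/2) * (z * (starRingEnd ℂ) z))) •
        (((m : ℂ) * z ^ (m-1) - (γ:ℂ)/2 * z ^ m * (starRingEnd ℂ) z) • (ContinuousLinearMap.id ℝ ℂ)
          + (-(γ:ℂ)/2 * z ^ (m+1)) • (Complex.conjCLE : ℂ →L[ℝ] ℂ)))) z := by
  have hconj : HasFDerivAt (fun w : ℂ => (starRingEnd ℂ) w) (Complex.conjCLE : ℂ →L[ℝ] ℂ) z :=
    Complex.conjCLE.hasFDerivAt
  have hq := (hasFDerivAt_id z).mul hconj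
  have hE := hq.const_mul (-(γ:ℂ)/2)
  have hexp := hE.cexp
  have hpow := ((hasDerivAt_pow m z).hasFDerivAt).restrictScalars ℝ
  have h := (hexp.mul hpow).const_mul C
  have hfun : (fun w : ℂ => C * (Complex.exp ((-(γ:ℂ)/2) * (w * (starRingEnd ℂ) w)) * w ^ m))
      = vsm γ C m := by
    funext w; simp [vsm, mul_assoc]
  simp only [id_eq, Pi.mul_def] at h
  rw [hfun] at h
  convert h using 1
  · rfl
  · rfl
  ext v
  simp only [ContinuousLinearMap.add_apply, ContinuousLinearMap.smul_apply,
    ContinuousLinearMap.coe_smul', Pi.smul_apply, ContinuousLinearMap.id_apply,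
    ContinuousLinearMap.coe_restrictScalars', ContinuousLinearMap.smulRight_apply,
    ContinuousLinearMap.one_apply, Complex.conjCLE_apply, smul_eq_mul,
    ContinuousLinearMap.toSpanSingleton_apply]
  ring

lemma par_aux (S T : ℂ) : ‖S + T‖^2 + ‖S - T‖^2 = 2*‖S‖^2 + 2*‖T‖^2 := by
  simp only [Complex.sq_norm, Complex.normSq_apply, Complex.add_re,
    Complex.add_im, Complex.sub_re, Complex.sub_im]
  ring

lemma kinetic_pointwise (γ : ℝ) (hγ : 0 < γ) (C : ℂ) (m : ℕ) (z : ℂ) :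
    ‖fderiv ℝ (vsm γ C m) z 1‖^2 + ‖fderiv ℝ (vsm γ C m) z Complex.I‖^2
      = ‖C‖^2 * Real.exp (-γ * ‖z‖^2) *
        (2*(m:ℝ)^2*‖z‖^(2*(m-1)) - 2*γ*(m:ℝ)*‖z‖^(2*m) + γ^2*‖z‖^(2*(m+1))) := by
  rw [(hasFDerivAt_vsm γ C m z).fderiv]
  set S : ℂ := (m : ℂ) * z ^ (m-1) - (γ:ℂ)/2 * z ^ m * (starRingEnd ℂ) z with hS
  set T : ℂ := -(γ:ℂ)/2 * z ^ (m+1) with hT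
  have h1 : ((C * Complex.exp ((-(γ:ℂ)/2) * (z * (starRingEnd ℂ) z))) •
        (S • (ContinuousLinearMap.id ℝ ℂ) + T • (Complex.conjCLE : ℂ →L[ℝ] ℂ))) 1
      = (C * Complex.exp ((-(γ:ℂ)/2) * (z * (starRingEnd ℂ) z))) * (S + T) := by
    simp [smul_eq_mul]; ring
  have h2 : ((C * Complex.exp ((-(γ:ℂ)/2) * (z * (starRingEnd ℂ) z))) •
        (S • (ContinuousLinearMap.id ℝ ℂ) + T • (Complex.conjCLE : ℂ →L[ℝ] ℂ))) Complex.I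
      = (C * Complex.exp ((-(γ:ℂ)/2) * (z * (starRingEnd ℂ) z))) * (Complex.I * (S - T)) := by
    simp [smul_eq_mul, Complex.conjCLE_apply, Complex.conj_I]; ring
  rw [h1, h2]
  have hnq : ‖z‖^2 = Complex.normSq z := by rw [Complex.sq_norm]
  have hnormE : ‖Complex.exp ((-(γ:ℂ)/2) * (z * (starRingEnd ℂ) z))‖^2
      = Real.exp (-γ * ‖z‖^2) := by
    rw [Complex.norm_exp, Complex.mul_conj,
      show (-(γ:ℂ)/2) * ((Complex.normSq z : ℝ):ℂ) = (((-γ/2 * Complex.normSq z : ℝ)):ℂ) by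
        push_cast; ring,
      Complex.ofReal_re, sq, ← Real.exp_add, hnq]
    ring_nf
  have key : 2*‖S‖^2 + 2*‖T‖^2
      = 2*(m:ℝ)^2*‖z‖^(2*(m-1)) - 2*γ*(m:ℝ)*‖z‖^(2*m) + γ^2*‖z‖^(2*(m+1)) := by
    have hpow2 : ∀ j : ℕ, ‖z‖^(2*j) = Complex.normSq z ^ j := by
      intro j; rw [pow_mul, hnq]
    have hT2 : ‖T‖^2 = γ^2/4 * (Complex.normSq z)^(m+1) := by
      rw [Complex.sq_norm, hT,
        show -(γ:ℂ)/2 * z^(m+1) = ((-γ/2 : ℝ):ℂ) * z^(m+1) by push_cast; ring,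
        Complex.normSq_mul, Complex.normSq_ofReal, map_pow Complex.normSq]
      ring
    rcases m with _ | k
    · have hS2 : ‖S‖^2 = γ^2/4 * Complex.normSq z := by
        have : S = ((-γ/2:ℝ):ℂ) * (starRingEnd ℂ) z := by
          rw [hS]; push_cast; ring
        rw [Complex.sq_norm, this, Complex.normSq_mul,
          Complex.normSq_ofReal, Complex.normSq_conj]
        ring
      rw [hS2, hT2, hpow2 0, hpow2 1]
      norm_num
      ring
    · have hS2 : ‖S‖^2 = Complex.normSq z ^ k * (((k:ℝ)+1) - γ/2 * Complex.normSq z)^2 := by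
        rw [Complex.sq_norm, hS]
        have : ((k+1 : ℕ) : ℂ) * z ^ (k+1-1) - (γ:ℂ)/2 * z^(k+1) * (starRingEnd ℂ) z
            = z^k * (((((k:ℝ)+1) - γ/2 * Complex.normSq z : ℝ)):ℂ) := by
          rw [show (k+1-1) = k from rfl, pow_succ, mul_assoc, mul_assoc, Complex.mul_conj]
          push_cast
          ring
        rw [this]
        simp only [Complex.normSq_mul, map_pow Complex.normSq, Complex.normSq_ofReal]
        ring
      rw [hS2, hT2, hpow2, hpow2, hpow2]
      push_cast
      ring_nf
  simp only [norm_mul, Complex.norm_I, one_mul, mul_pow]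
  rw [hnormE, ← key, ← par_aux S T]
  ring

lemma norm_vsm_sq (γ : ℝ) (C : ℂ) (m : ℕ) (z : ℂ) :
    ‖vsm γ C m z‖ ^ 2 = ‖C‖^2 * (‖z‖ ^ (2*m) * Real.exp (-γ * ‖z‖ ^ 2)) := by
  have hnq : ‖z‖^2 = Complex.normSq z := by rw [Complex.sq_norm]
  have hnormE : ‖Complex.exp ((-(γ:ℂ)/2) * (z * (starRingEnd ℂ) z))‖^2
      = Real.exp (-γ * ‖z‖^2) := by
    rw [Complex.norm_exp, Complex.mul_conj,
      show (-(γ:ℂ)/2) * ((Complex.normSq z : ℝ):ℂ) = (((-γ/2 * Complex.normSq z : ℝ)):ℂ) by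
        push_cast; ring,
      Complex.ofReal_re, sq, ← Real.exp_add, hnq]
    ring_nf
  rw [vsm, norm_mul, norm_mul, mul_pow, mul_pow, hnormE, norm_pow, pow_mul, ← pow_mul]
  ring

lemma mass_vortex {γ : ℝ} (hγ : 0 < γ) (m : ℕ) :
    (∫ z : ℂ, ‖vortex γ (m : ℤ) z‖ ^ 2) = 1 := by
  have hpi := Real.pi_pos
  have hfac := Nat.factorial_pos m
  simp only [vortex_eq γ m, norm_vsm_sq]
  rw [MeasureTheory.integral_const_mul, momC hγ m]
  rw [Complex.norm_real, Real.norm_eq_abs, _root_.sq_abs, vc_sq γ hγ m]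
  field_simp

lemma potential_vortex {γ : ℝ} (hγ : 0 < γ) (m : ℕ) :
    (∫ z : ℂ, ‖z‖ ^ 2 * ‖vortex γ (m : ℤ) z‖ ^ 2) = ((m:ℝ) + 1) / γ := by
  have hpi := Real.pi_pos
  have hfac := Nat.factorial_pos m
  have hpt : ∀ z : ℂ, ‖z‖ ^ 2 * ‖vortex γ (m : ℤ) z‖ ^ 2
      = vc γ m ^ 2 * (‖z‖ ^ (2*(m+1)) * Real.exp (-γ * ‖z‖ ^ 2)) := by
    intro z
    rw [vortex_eq γ m, norm_vsm_sq, Complex.norm_real, Real.norm_eq_abs, _root_.sq_abs]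
    ring
  simp only [hpt]
  rw [MeasureTheory.integral_const_mul, momC hγ (m+1), vc_sq γ hγ m,
    Nat.factorial_succ]
  have hγ' : γ ≠ 0 := hγ.ne'
  have hfac' : ((Nat.factorial m : ℝ)) ≠ 0 := by exact_mod_cast hfac.ne'
  field_simp
  push_cast
  ring

lemma kinetic_vortex {γ : ℝ} (hγ : 0 < γ) (m : ℕ) :
    (∫ z : ℂ, (‖fderiv ℝ (vortex γ (m : ℤ)) z 1‖ ^ 2
        + ‖fderiv ℝ (vortex γ (m : ℤ)) z Complex.I‖ ^ 2)) = ((m:ℝ) + 1) * γ := by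
  have hpi := Real.pi_pos
  have hC : ‖((vc γ m : ℝ) : ℂ)‖^2 = vc γ m ^ 2 := by
    rw [Complex.norm_real, Real.norm_eq_abs, _root_.sq_abs]
  have hpt : ∀ z : ℂ, ‖fderiv ℝ (vortex γ (m : ℤ)) z 1‖ ^ 2
        + ‖fderiv ℝ (vortex γ (m : ℤ)) z Complex.I‖ ^ 2
      = (fun r : ℝ => vc γ m ^2 * Real.exp (-γ * r^2) *
          (2*(m:ℝ)^2*r^(2*(m-1)) - 2*γ*(m:ℝ)*r^(2*m) + γ^2*r^(2*(m+1)))) ‖z‖ := by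
    intro z
    rw [vortex_fun_eq γ m, kinetic_pointwise γ hγ _ m z, hC]
  simp only [hpt]
  rw [integral_radial (fun r : ℝ => vc γ m ^2 * Real.exp (-γ * r^2) *
          (2*(m:ℝ)^2*r^(2*(m-1)) - 2*γ*(m:ℝ)*r^(2*m) + γ^2*r^(2*(m+1))))]
  have hsplit : (fun r : ℝ => r * (vc γ m ^2 * Real.exp (-γ * r^2) *
          (2*(m:ℝ)^2*r^(2*(m-1)) - 2*γ*(m:ℝ)*r^(2*m) + γ^2*r^(2*(m+1)))))
      = fun r : ℝ => (2*(m:ℝ)^2 * vc γ m ^2) * (r * (r^(2*(m-1)) * Real.exp (-γ * r^2)))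
          + ((-(2*γ*(m:ℝ) * vc γ m ^2)) * (r * (r^(2*m) * Real.exp (-γ * r^2)))
            + (γ^2 * vc γ m ^2) * (r * (r^(2*(m+1)) * Real.exp (-γ * r^2)))) := by
    funext r; ring
  rw [hsplit]
  have I1 : IntegrableOn (fun r : ℝ => (2*(m:ℝ)^2 * vc γ m ^2) *
      (r * (r^(2*(m-1)) * Real.exp (-γ * r^2)))) (Ioi 0) :=
    (momentIntegrable hγ (m-1)).const_mul _
  have I2 : IntegrableOn (fun r : ℝ => (-(2*γ*(m:ℝ) * vc γ m ^2)) *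
      (r * (r^(2*m) * Real.exp (-γ * r^2)))) (Ioi 0) :=
    (momentIntegrable hγ m).const_mul _
  have I3 : IntegrableOn (fun r : ℝ => (γ^2 * vc γ m ^2) *
      (r * (r^(2*(m+1)) * Real.exp (-γ * r^2)))) (Ioi 0) :=
    (momentIntegrable hγ (m+1)).const_mul _
  have I23 : IntegrableOn (fun r : ℝ => (-(2*γ*(m:ℝ) * vc γ m ^2)) *
      (r * (r^(2*m) * Real.exp (-γ * r^2)))
        + (γ^2 * vc γ m ^2) * (r * (r^(2*(m+1)) * Real.exp (-γ * r^2)))) (Ioi 0) := I2.add I3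
  rw [MeasureTheory.integral_add I1 I23, MeasureTheory.integral_add I2 I3,
    MeasureTheory.integral_const_mul, MeasureTheory.integral_const_mul,
    MeasureTheory.integral_const_mul, moment1d hγ (m-1), moment1d hγ m, moment1d hγ (m+1)]
  have hγ' : γ ≠ 0 := hγ.ne'
  rcases m with _ | k
  · rw [vc_sq γ hγ 0]
    simp [Nat.factorial]
    field_simp
  · rw [vc_sq γ hγ (k+1)]
    have hfac' : ((Nat.factorial (k+1) : ℝ)) ≠ 0 := by
      exact_mod_cast (Nat.factorial_pos (k+1)).ne'
    have h1 : (k+1) - 1 = k := rfl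
    rw [h1]
    rw [show Nat.factorial (k+1) = (k+1) * Nat.factorial k from rfl,
      show Nat.factorial (k+1+1) = (k+2)*((k+1) * Nat.factorial k) by
        rw [Nat.factorial_succ, Nat.factorial_succ]]
    have hfk : ((Nat.factorial k : ℝ)) ≠ 0 := by exact_mod_cast (Nat.factorial_pos k).ne'
    push_cast
    field_simp
    ring

lemma deriv_rot (γ : ℝ) (m : ℕ) (z : ℂ) :
    deriv (fun t : ℝ => vortex γ (m : ℤ) (Complex.exp (Complex.I * (t : ℂ)) * z)) 0
      = Complex.I * (m : ℂ) * vortex γ (m : ℤ) z := by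
  have hfun : (fun t : ℝ => vortex γ (m : ℤ) (Complex.exp (Complex.I * (t : ℂ)) * z))
      = fun t : ℝ => vortex γ (m : ℤ) z * Complex.exp (Complex.I * (m : ℂ) * (t : ℂ)) := by
    funext t
    rw [vortex_eq γ m, vortex_eq γ m, vsm, vsm]
    have hconj : (starRingEnd ℂ) (Complex.exp (Complex.I * (t:ℂ)) * z)
        = Complex.exp (-(Complex.I * (t:ℂ))) * (starRingEnd ℂ) z := by
      rw [map_mul, ← Complex.exp_conj, map_mul, Complex.conj_I, Complex.conj_ofReal]
      ring_nf
    have harg : (Complex.exp (Complex.I * (t:ℂ)) * z) *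
          (starRingEnd ℂ) (Complex.exp (Complex.I * (t:ℂ)) * z) = z * (starRingEnd ℂ) z := by
      rw [hconj, show Complex.exp (Complex.I * (t:ℂ)) * z *
            (Complex.exp (-(Complex.I * (t:ℂ))) * (starRingEnd ℂ) z)
          = (Complex.exp (Complex.I * (t:ℂ)) * Complex.exp (-(Complex.I * (t:ℂ))))
            * (z * (starRingEnd ℂ) z) by ring, ← Complex.exp_add]
      simp
    rw [harg, mul_pow, show Complex.exp (Complex.I * (t:ℂ)) ^ m
        = Complex.exp (Complex.I * (m:ℂ) * (t:ℂ)) by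
      rw [← Complex.exp_nat_mul]; ring_nf]
    ring
  rw [hfun]
  have h0 : HasDerivAt (fun t : ℝ => ((t : ℂ))) 1 (0:ℝ) := by
    simpa using (hasDerivAt_id (0:ℝ)).ofReal_comp
  have h1 : HasDerivAt (fun t : ℝ => Complex.I * (m : ℂ) * (t : ℂ))
      (Complex.I * (m : ℂ)) (0:ℝ) := by
    simpa using h0.const_mul (Complex.I * (m : ℂ))
  have h2 := (h1.cexp).const_mul (vortex γ (m : ℤ) z)
  rw [h2.deriv]
  simp
  ring

lemma angular_vortex {γ : ℝ} (hγ : 0 < γ) (m : ℕ) :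
    (∫ z : ℂ, (starRingEnd ℂ) (vortex γ (m : ℤ) z) *
      (-Complex.I * deriv (fun t : ℝ =>
          vortex γ (m : ℤ) (Complex.exp (Complex.I * (t : ℂ)) * z)) 0)).re = (m : ℝ) := by
  have hpt : ∀ z : ℂ, (starRingEnd ℂ) (vortex γ (m : ℤ) z) *
      (-Complex.I * deriv (fun t : ℝ =>
          vortex γ (m : ℤ) (Complex.exp (Complex.I * (t : ℂ)) * z)) 0)
      = (((m : ℝ) * ‖vortex γ (m : ℤ) z‖ ^ 2 : ℝ) : ℂ) := by
    intro z
    rw [deriv_rot γ m z]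
    rw [show (starRingEnd ℂ) (vortex γ (m : ℤ) z) *
        (-Complex.I * (Complex.I * (m : ℂ) * vortex γ (m : ℤ) z))
        = (-Complex.I * Complex.I) * (m : ℂ) *
          (vortex γ (m : ℤ) z * (starRingEnd ℂ) (vortex γ (m : ℤ) z)) by ring,
      Complex.mul_conj]
    simp only [neg_mul, Complex.I_mul_I, neg_neg, one_mul]
    rw [show Complex.normSq (vortex γ (m : ℤ) z) = ‖vortex γ (m : ℤ) z‖^2 by
      rw [Complex.sq_norm]]
    push_cast
    ring
  simp only [hpt]
  have h : (∫ z : ℂ, (((m : ℝ) * ‖vortex γ (m : ℤ) z‖ ^ 2 : ℝ) : ℂ))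
      = ((∫ z : ℂ, (m : ℝ) * ‖vortex γ (m : ℤ) z‖ ^ 2 : ℝ) : ℂ) :=
    _root_.integral_ofReal (𝕜 := ℂ)
  rw [h, Complex.ofReal_re, MeasureTheory.integral_const_mul, mass_vortex hγ m, mul_one]

end VortexAux

/-- Fast rotation `Ω > γ` gives `E_{Ω,γ}(ψ_m) ≤ (|m|+1)γ − Ωm → −∞`, hence the
constrained infimum of the energy on the unit-mass sphere is `−∞`. -/
theorem stmt_17 (γ Ω : ℝ) (hγ : 0 < γ) (hΩ : γ < Ω) (G : ℝ → ℝ)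
    (hG : ∀ s, 0 ≤ s → 0 ≤ G s) :
    (∀ m : ℕ, rotEnergy γ Ω G (vortex γ (m : ℤ)) ≤ ((m : ℝ) + 1) * γ - Ω * (m : ℝ)) ∧
    Filter.Tendsto (fun m : ℕ => rotEnergy γ Ω G (vortex γ (m : ℤ))) Filter.atTop Filter.atBot ∧
    ¬ BddBelow {r : ℝ | ∃ u : ℂ → ℂ, (∫ z : ℂ, ‖u z‖ ^ 2) = 1 ∧ r = rotEnergy γ Ω G u} := by
  have key : ∀ m : ℕ, rotEnergy γ Ω G (vortex γ (m : ℤ)) ≤ ((m : ℝ) + 1) * γ - Ω * (m : ℝ) := by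
    intro m
    have hGnn : 0 ≤ ∫ z : ℂ, G (‖vortex γ (m:ℤ) z‖ ^ 2) :=
      integral_nonneg fun z => hG _ (sq_nonneg _)
    rw [rotEnergy, VortexAux.kinetic_vortex hγ m, VortexAux.potential_vortex hγ m,
      VortexAux.angular_vortex hγ m]
    have hγ' : γ ≠ 0 := hγ.ne'
    have heq : (1/2 : ℝ) * (((m:ℝ)+1)*γ) + γ^2/2 * (((m:ℝ)+1)/γ) - Ω * m
        = ((m:ℝ)+1)*γ - Ω*m := by
      field_simp
      ring
    linarith
  have htend : Filter.Tendsto (fun m : ℕ => rotEnergy γ Ω G (vortex γ (m : ℤ)))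
      Filter.atTop Filter.atBot := by
    have h1 : Filter.Tendsto (fun m : ℕ => (γ - Ω) * (m:ℝ)) Filter.atTop Filter.atBot :=
      (tendsto_natCast_atTop_atTop).const_mul_atTop_of_neg (by linarith)
    have h2 : Filter.Tendsto (fun m : ℕ => (γ - Ω) * (m:ℝ) + γ) Filter.atTop Filter.atBot :=
      Filter.tendsto_atBot_add_const_right _ γ h1
    have h3 : Filter.Tendsto (fun m : ℕ => ((m:ℝ)+1)*γ - Ω*(m:ℝ)) Filter.atTop Filter.atBot :=
      h2.congr fun m => by ring
    exact Filter.tendsto_atBot_mono key h3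
  refine ⟨key, htend, ?_⟩
  rintro ⟨b, hbb⟩
  obtain ⟨m, hm⟩ := (htend.eventually (Filter.eventually_lt_atBot b)).exists
  have hmem : rotEnergy γ Ω G (vortex γ (m : ℤ)) ∈
      {r : ℝ | ∃ u : ℂ → ℂ, (∫ z : ℂ, ‖u z‖ ^ 2) = 1 ∧ r = rotEnergy γ Ω G u} :=
    ⟨vortex γ (m : ℤ), VortexAux.mass_vortex hγ m, rfl⟩
  exact absurd (hbb hmem) (not_le.mpr hm)
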